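/- Let b be an α-regular Volterra process and φ = Σ_{i=1}^{n} φ_i 1_{[t_i,t_{i+1})} a step function on [0,T] (with 0 = t₁ < … < t_{n+1} = T). Then the elementary integral i_T(φ) = Σ_{i=1}^{n} φ_i (b_{t_{i+1}} − b_{t_i}) satisfies the Itô-type isometry ‖i_T(φ)‖²_{L²(Ω)} = ∫₀^T (∫_r^T φ(u) ∂K/∂u(u,r) du)² dr = ‖𝒦*_T φ‖²_{L²(0,T)}. -/

import Mathlib

open MeasureTheory ProbabilityTheory Filter Set Topology
open scoped ENNReal NNReal RealInnerProductSpace BigOperators Classical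

noncomputable section

/-! ### Wiener chaos -/

/-- The `n`-th Hermite polynomial function
`H_n(x) = ((−1)^n/n!) e^{x²/2} dⁿ/dxⁿ (e^{−x²/2})`. -/
def hermiteFun (n : ℕ) (x : ℝ) : ℝ :=
  ((-1 : ℝ) ^ n / n.factorial) * Real.exp (x ^ 2 / 2) *
    iteratedDeriv n (fun y => Real.exp (-(y ^ 2) / 2)) x

/-- `W` is an `H`-isonormal Gaussian process on `(Ω, P)`. -/
structure IsIsonormal {H : Type*} [NormedAddCommGroup H] [InnerProductSpace ℝ H]
    {Ω : Type*} [MeasurableSpace Ω] (P : Measure Ω) (W : H → Ω → ℝ) : Prop where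
  meas : ∀ h, Measurable (W h)
  gaussian : ∀ h : H, P.map (W h) = gaussianReal 0 (‖h‖₊ ^ 2)
  cov : ∀ h₁ h₂ : H, ∫ ω, W h₁ ω * W h₂ ω ∂P = ⟪h₁, h₂⟫

/-- The `n`-th Wiener chaos of `W`: the closed linear subspace of `L²(Ω)` generated by
`{H_n(W(h)) : h ∈ H, ‖h‖ = 1}`. -/
def wienerChaos {H : Type*} [NormedAddCommGroup H] [InnerProductSpace ℝ H]
    {Ω : Type*} [MeasurableSpace Ω] (P : Measure Ω) (W : H → Ω → ℝ) (n : ℕ) :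
    Set (Lp ℝ 2 P) :=
  closure (Submodule.span ℝ
    {f : Lp ℝ 2 P | ∃ h : H, ‖h‖ = 1 ∧ ∀ᵐ ω ∂P, f ω = hermiteFun n (W h ω)} : Set (Lp ℝ 2 P))

/-- The finite direct sum of Wiener chaoses `𝓗 := ⊕_{i=0}^m 𝓗_i` as a subset of `L²(Ω)`. -/
def chaosSum {H : Type*} [NormedAddCommGroup H] [InnerProductSpace ℝ H]
    {Ω : Type*} [MeasurableSpace Ω] (P : Measure Ω) (W : H → Ω → ℝ) (m : ℕ) :
    Set (Lp ℝ 2 P) :=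
  {f | ∃ g : Fin (m + 1) → Lp ℝ 2 P,
    (∀ i : Fin (m + 1), g i ∈ wienerChaos P W (i : ℕ)) ∧ f = ∑ i, g i}

/-! ### γ-radonifying operators -/

/-- A centered Gaussian probability measure on a Banach space. -/
def IsCenteredGaussianMeasure {E : Type*} [NormedAddCommGroup E] [NormedSpace ℝ E]
    [MeasurableSpace E] (ν : Measure E) : Prop :=
  IsProbabilityMeasure ν ∧ ∀ φ : E →L[ℝ] ℝ, ∃ v : ℝ≥0, ν.map φ = gaussianReal 0 v

/-- `R : U → E` is γ-radonifying: there is a centered Gaussian probability measure `ν` on `E`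
with `∫ φ(x)² ν(dx) = ‖φ ∘ R‖²` for all `φ ∈ E*`. -/
def IsGammaRadonifying {U : Type*} [NormedAddCommGroup U] [InnerProductSpace ℝ U]
    {E : Type*} [NormedAddCommGroup E] [NormedSpace ℝ E] [MeasurableSpace E]
    (R : U →L[ℝ] E) : Prop :=
  ∃ ν : Measure E, IsCenteredGaussianMeasure ν ∧
    ∀ φ : E →L[ℝ] ℝ, ∫ x, (φ x) ^ 2 ∂ν = ‖φ.comp R‖ ^ 2

/-- The γ-radonifying norm `‖R‖_{γ(U,E)} = (∫_E ‖x‖² ν_R(dx))^{1/2}` (and `0` if `R` is not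
γ-radonifying). -/
def gammaNorm {U : Type*} [NormedAddCommGroup U] [InnerProductSpace ℝ U]
    {E : Type*} [NormedAddCommGroup E] [NormedSpace ℝ E] [MeasurableSpace E]
    (R : U →L[ℝ] E) : ℝ :=
  if h : IsGammaRadonifying R then Real.sqrt (∫ x, ‖x‖ ^ 2 ∂h.choose) else 0

/-! ### Volterra kernels and processes -/

/-- An `α`-regular Volterra kernel. -/
structure IsVolterraKernel (α : ℝ) (K : ℝ → ℝ → ℝ) : Prop where
  meas : Measurable (Function.uncurry K)
  nonneg : ∀ t r, 0 ≤ K t r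
  zero_zero : K 0 0 = 0
  of_lt : ∀ t r, 0 ≤ t → t < r → K t r = 0
  lim_zero : ∀ r, 0 ≤ r → Tendsto (fun t => K t r) (𝓝[>] r) (𝓝 0)
  sq_integrable : ∀ t, 0 ≤ t → IntegrableOn (fun r => (K t r) ^ 2) (Set.Ioc 0 t)
  smooth : ∀ r T : ℝ, 0 ≤ r → 0 < T → ContDiffOn ℝ 1 (fun u => K u r) (Set.Ioo r T)
  deriv_bound : ∀ T > 0, ∃ C > 0, ∀ r u : ℝ, 0 < r → r < u → u ≤ T →
    |deriv (fun v => K v r) u| ≤ C * (u - r) ^ (α - 1) * (u / r) ^ α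

/-- An `α`-regular Volterra process with kernel `K`: a centered continuous process,
starting from `0`, with covariance `E(b_s b_t) = ∫₀^{s∧t} K(s,r) K(t,r) dr`. -/
structure IsVolterraProcess (α : ℝ) (K : ℝ → ℝ → ℝ) {Ω : Type*} [MeasurableSpace Ω]
    (P : Measure Ω) (b : ℝ → Ω → ℝ) : Prop where
  kernel : IsVolterraKernel α K
  meas : ∀ t, Measurable (b t)
  start : ∀ᵐ ω ∂P, b 0 ω = 0
  cont : ∀ᵐ ω ∂P, ContinuousOn (fun t => b t ω) (Set.Ici 0)
  memL2 : ∀ t, 0 ≤ t → MemLp (b t) 2 P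
  centered : ∀ t, 0 ≤ t → ∫ ω, b t ω ∂P = 0
  cov : ∀ s t, 0 ≤ s → 0 ≤ t →
    ∫ ω, b s ω * b t ω ∂P = ∫ r in Set.Ioc 0 (min s t), K s r * K t r

/-- The operator `(𝒦*_T φ)(r) = ∫_r^T φ(u) ∂K/∂u(u,r) du`. -/
def kernelStar (T : ℝ) (K : ℝ → ℝ → ℝ) (φ : ℝ → ℝ) (r : ℝ) : ℝ :=
  ∫ u in Set.Ioc r T, φ u * deriv (fun v => K v r) u

/-- The space of (deterministic) real step functions on `[0,T]`, as the linear span of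
indicators of intervals `[s,t) ⊆ [0,T]`. -/
def stepFunctions (T : ℝ) : Submodule ℝ (ℝ → ℝ) :=
  Submodule.span ℝ
    {f | ∃ s t : ℝ, 0 ≤ s ∧ s ≤ t ∧ t ≤ T ∧ f = Set.indicator (Set.Ico s t) fun _ => (1 : ℝ)}

/-- The indicator of `[s,t)` as a step function on `[0,T]`. -/
def stepGen {T : ℝ} (s t : ℝ) (hs : 0 ≤ s) (hst : s ≤ t) (htT : t ≤ T) : stepFunctions T :=
  ⟨Set.indicator (Set.Ico s t) fun _ => (1 : ℝ),
    Submodule.subset_span ⟨s, t, hs, hst, htT, rfl⟩⟩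

/-- `𝒟` (with the given inner product space structure and the linear map `ι` from step
functions) is the completion of the step functions on `[0,T]` under
`⟪f,g⟫_𝒟 = ⟪𝒦*_T f, 𝒦*_T g⟫_{L²(0,T)}`: `ι` has dense range and realizes this inner
product. -/
def IsVolterraDomain {𝓓 : Type*} [NormedAddCommGroup 𝓓] [InnerProductSpace ℝ 𝓓]
    [CompleteSpace 𝓓] (T : ℝ) (K : ℝ → ℝ → ℝ) (ι : stepFunctions T →ₗ[ℝ] 𝓓) : Prop :=
  DenseRange ι ∧ ∀ f g : stepFunctions T,
    ⟪ι f, ι g⟫ = ∫ r in Set.Ioc 0 T, kernelStar T K (f : ℝ → ℝ) r * kernelStar T K (g : ℝ → ℝ) r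

/-- `d ∈ 𝒟` is represented by the (deterministic) function `g : [0,T] → ℝ`; by density of the
range of `ι` this determines `d` uniquely. -/
def RepresentsIn {𝓓 : Type*} [NormedAddCommGroup 𝓓] [InnerProductSpace ℝ 𝓓]
    [CompleteSpace 𝓓] (T : ℝ) (K : ℝ → ℝ → ℝ) (ι : stepFunctions T →ₗ[ℝ] 𝓓)
    (g : ℝ → ℝ) (d : 𝓓) : Prop :=
  (∀ f : stepFunctions T,
    ⟪d, ι f⟫ = ∫ r in Set.Ioc 0 T, kernelStar T K g r * kernelStar T K (f : ℝ → ℝ) r) ∧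
  ‖d‖ ^ 2 = ∫ r in Set.Ioc 0 T, (kernelStar T K g r) ^ 2

end

section AuxLemmas

open MeasureTheory Set Filter

variable {α : ℝ} {K : ℝ → ℝ → ℝ}

lemma integrableOn_sub_rpow (r T p : ℝ) (hp : (-1:ℝ) < p) :
    IntegrableOn (fun u => (u - r) ^ p) (Set.Ioc r T) := by
  rcases le_or_gt T r with h | h
  · rw [Set.Ioc_eq_empty (by exact not_lt.mpr h)]; exact integrableOn_empty
  · have h1 : IntervalIntegrable (fun x : ℝ => x ^ p) volume 0 (T - r) :=
      intervalIntegral.intervalIntegrable_rpow' hp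
    have h2 := h1.comp_sub_right r
    simp only [zero_add, sub_add_cancel] at h2
    exact (intervalIntegrable_iff_integrableOn_Ioc_of_le h.le).mp h2

lemma memL2_mul_integrable {Ω : Type*} [MeasurableSpace Ω] {P : Measure Ω} {f g : Ω → ℝ}
    (hf : MemLp f 2 P) (hg : MemLp g 2 P) :
    Integrable (fun ω => f ω * g ω) P := by
  refine (hf.integrable_sq.add hg.integrable_sq).mono' (hf.1.mul hg.1) ?_
  filter_upwards with ω
  have h1 : ‖f ω * g ω‖ = |f ω| * |g ω| := by rw [Real.norm_eq_abs, abs_mul]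
  rw [h1]; simp only [Pi.add_apply]
  nlinarith [sq_nonneg (|f ω| - |g ω|), sq_abs (f ω), sq_abs (g ω)]

lemma IsVolterraKernel.meas_right (hK : IsVolterraKernel α K) (s : ℝ) :
    Measurable (fun r => K s r) :=
  hK.meas.comp (measurable_const.prodMk measurable_id)

/-- Integrability of `u ↦ ∂K/∂u (u, r)` on `(r, T]` for `r > 0`. -/
lemma IsVolterraKernel.deriv_integrableOn (hK : IsVolterraKernel α K) (hα : 0 < α)
    {r T : ℝ} (hr : 0 < r) :
    IntegrableOn (fun u => deriv (fun v => K v r) u) (Set.Ioc r T) := by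
  rcases le_or_gt T r with h | h
  · rw [Set.Ioc_eq_empty (by exact not_lt.mpr h)]; exact integrableOn_empty
  · obtain ⟨C, hC, hbound⟩ := hK.deriv_bound T (hr.trans h)
    have hmeas : Measurable (deriv (fun v : ℝ => K v r)) := measurable_deriv _
    refine Integrable.mono' (g := fun u => (C * (T / r) ^ α) * (u - r) ^ (α - 1))
      ((integrableOn_sub_rpow r T (α - 1) (by linarith)).const_mul _)
      hmeas.aestronglyMeasurable.restrict ?_
    filter_upwards [ae_restrict_mem measurableSet_Ioc] with u hu
    have h1 := hbound r u hr hu.1 hu.2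
    rw [Real.norm_eq_abs]
    calc |deriv (fun v => K v r) u| ≤ C * (u - r) ^ (α - 1) * (u / r) ^ α := h1
      _ ≤ C * (u - r) ^ (α - 1) * (T / r) ^ α := by
          refine mul_le_mul_of_nonneg_left ?_
            (mul_nonneg hC.le (Real.rpow_nonneg (by linarith [hu.1]) _))
          exact Real.rpow_le_rpow (le_of_lt (div_pos (hr.trans hu.1) hr))
            ((div_le_div_iff_of_pos_right hr).mpr hu.2) hα.le
      _ = (C * (T / r) ^ α) * (u - r) ^ (α - 1) := by ring

/-- Improper fundamental theorem of calculus for the kernel from the singular endpoint. -/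
lemma IsVolterraKernel.integral_deriv (hK : IsVolterraKernel α K) (hα : 0 < α)
    {r s : ℝ} (hr : 0 < r) (hs : r < s) :
    ∫ u in Set.Ioc r s, deriv (fun v => K v r) u = K s r := by
  have hsm : ContDiffOn ℝ 1 (fun u => K u r) (Set.Ioo r (s + 1)) :=
    hK.smooth r (s + 1) hr.le (by linarith)
  have hdiff : ∀ x ∈ Set.Ioo r (s + 1),
      HasDerivAt (fun v => K v r) (deriv (fun v => K v r) x) x := fun x hx =>
    ((hsm.differentiableOn one_ne_zero).differentiableAt (isOpen_Ioo.mem_nhds hx)).hasDerivAt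
  have hint : IntervalIntegrable (fun u => deriv (fun v => K v r) u) volume r s :=
    (intervalIntegrable_iff_integrableOn_Ioc_of_le hs.le).mpr (hK.deriv_integrableOn hα hr)
  have hend : Tendsto (fun u => K u r) (𝓝[<] s) (𝓝 (K s r)) :=
    ((hdiff s ⟨hs, by linarith⟩).continuousAt.tendsto).mono_left nhdsWithin_le_nhds
  have h := intervalIntegral.integral_eq_sub_of_hasDerivAt_of_tendsto hs
    (fun x hx => hdiff x ⟨hx.1, by nlinarith [hx.2]⟩) hint (hK.lim_zero r hr.le) hend
  rw [intervalIntegral.integral_of_le hs.le] at h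
  rw [h, sub_zero]

/-- Fundamental theorem of calculus for the kernel away from the singular endpoint. -/
lemma IsVolterraKernel.integral_deriv' (hK : IsVolterraKernel α K) (hα : 0 < α)
    {r a s : ℝ} (hr : 0 < r) (hra : r < a) (has : a ≤ s) :
    ∫ u in Set.Ioc a s, deriv (fun v => K v r) u = K s r - K a r := by
  rcases eq_or_lt_of_le has with rfl | h
  · simp
  · have h1 := hK.integral_deriv hα hr (hra.trans h)
    have h2 := hK.integral_deriv hα hr hra
    have hsplit : Set.Ioc r a ∪ Set.Ioc a s = Set.Ioc r s :=
      Set.Ioc_union_Ioc_eq_Ioc hra.le has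
    have hu := setIntegral_union (f := fun u => deriv (fun v => K v r) u)
      (Set.Ioc_disjoint_Ioc_of_le le_rfl) measurableSet_Ioc
      (hK.deriv_integrableOn hα hr)
      ((hK.deriv_integrableOn hα hr (T := s)).mono_set (Set.Ioc_subset_Ioc_left hra.le))
    rw [hsplit, h1, h2] at hu
    linarith

/-- The key step: `𝒦*_T` of the indicator of `[a,s)` is `K(s,r) − K(a,r)`. -/
lemma IsVolterraKernel.step_integral (hK : IsVolterraKernel α K) (hα : 0 < α)
    {T a s r : ℝ} (ha : 0 ≤ a) (has : a < s) (hsT : s ≤ T)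
    (hr : 0 < r) (hra : r ≠ a) (hrs : r ≠ s) :
    ∫ u in Set.Ioc r T,
        Set.indicator (Set.Ico a s) (fun _ => (1:ℝ)) u * deriv (fun v => K v r) u
      = K s r - K a r := by
  have hind : ∀ u, Set.indicator (Set.Ico a s) (fun _ => (1:ℝ)) u * deriv (fun v => K v r) u
      = Set.indicator (Set.Ico a s) (fun u => deriv (fun v => K v r) u) u := by
    intro u; by_cases h : u ∈ Set.Ico a s <;> simp [h]
  simp_rw [hind]
  rw [setIntegral_indicator measurableSet_Ico]
  rcases lt_or_gt_of_ne hra with h1 | h1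
  · -- r < a
    have hIs : Set.Ioc r T ∩ Set.Ico a s = Set.Ico a s :=
      Set.inter_eq_self_of_subset_right fun u hu =>
        ⟨h1.trans_le hu.1, hu.2.le.trans hsT⟩
    rw [hIs, integral_Ico_eq_integral_Ioo, ← integral_Ioc_eq_integral_Ioo]
    exact hK.integral_deriv' hα hr h1 has.le
  · rcases lt_or_gt_of_ne hrs with h2 | h2
    · -- a < r < s
      have hIs : Set.Ioc r T ∩ Set.Ico a s = Set.Ioo r s := by
        ext u
        simp only [Set.mem_inter_iff, Set.mem_Ioc, Set.mem_Ico, Set.mem_Ioo]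
        constructor
        · rintro ⟨⟨h3, _⟩, _, h4⟩; exact ⟨h3, h4⟩
        · rintro ⟨h3, h4⟩
          exact ⟨⟨h3, h4.le.trans hsT⟩, (h1.le.trans h3.le), h4⟩
      rw [hIs, ← integral_Ioc_eq_integral_Ioo, hK.integral_deriv hα hr h2,
        hK.of_lt a r ha h1, sub_zero]
    · -- s < r
      have hIs : Set.Ioc r T ∩ Set.Ico a s = ∅ := by
        ext u
        simp only [Set.mem_inter_iff, Set.mem_Ioc, Set.mem_Ico,
          Set.mem_empty_iff_false, iff_false, not_and, and_imp]
        intro h3 _ _ h4; linarith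
      rw [hIs, hK.of_lt s r (ha.trans has.le) h2, hK.of_lt a r ha (has.trans h2)]
      simp

lemma IsVolterraKernel.sq_integrableOn' (hK : IsVolterraKernel α K)
    {s T : ℝ} (hs : 0 ≤ s) (hsT : s ≤ T) :
    IntegrableOn (fun r => K s r ^ 2) (Set.Ioc 0 T) := by
  rw [← Set.Ioc_union_Ioc_eq_Ioc hs hsT]
  refine (hK.sq_integrable s hs).union ?_
  exact (integrableOn_congr_fun (g := fun _ => 0)
    (fun r hr => by simp [hK.of_lt s r hs hr.1]) measurableSet_Ioc).mpr (integrableOn_zero)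

lemma IsVolterraKernel.mul_integrableOn (hK : IsVolterraKernel α K)
    {s u T : ℝ} (hs : 0 ≤ s) (hsT : s ≤ T) (hu : 0 ≤ u) (huT : u ≤ T) :
    IntegrableOn (fun r => K s r * K u r) (Set.Ioc 0 T) := by
  refine ((hK.sq_integrableOn' hs hsT).add (hK.sq_integrableOn' hu huT)).mono'
    (((hK.meas_right s).mul (hK.meas_right u)).aestronglyMeasurable.restrict) ?_
  filter_upwards with r
  simp only [Pi.add_apply, Real.norm_eq_abs, abs_mul]
  nlinarith [sq_nonneg (|K s r| - |K u r|), sq_abs (K s r), sq_abs (K u r)]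

lemma IsVolterraProcess.cov_ext {Ω : Type*} [MeasurableSpace Ω] {P : Measure Ω}
    {b : ℝ → Ω → ℝ} (hb : IsVolterraProcess α K P b)
    {s u T : ℝ} (hs : 0 ≤ s) (hsT : s ≤ T) (hu : 0 ≤ u) (huT : u ≤ T) :
    ∫ ω, b s ω * b u ω ∂P = ∫ r in Set.Ioc 0 T, K s r * K u r := by
  rw [hb.cov s u hs hu]
  have hm1 : 0 ≤ min s u := le_min hs hu
  have hm2 : min s u ≤ T := (min_le_left _ _).trans hsT
  have hzero : ∫ r in Set.Ioc (min s u) T, K s r * K u r = 0 := by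
    refine setIntegral_eq_zero_of_forall_eq_zero fun r hr => ?_
    have hlt : min s u < r := hr.1
    rcases le_total s u with h | h
    · rw [min_eq_left h] at hlt; rw [hb.kernel.of_lt s r hs hlt, zero_mul]
    · rw [min_eq_right h] at hlt; rw [hb.kernel.of_lt u r hu hlt, mul_zero]
  rw [show Set.Ioc 0 T = Set.Ioc 0 (min s u) ∪ Set.Ioc (min s u) T from
      (Set.Ioc_union_Ioc_eq_Ioc hm1 hm2).symm,
    setIntegral_union (Set.Ioc_disjoint_Ioc_of_le le_rfl) measurableSet_Ioc
      ((hb.kernel.mul_integrableOn hs hsT hu huT).mono_set (Set.Ioc_subset_Ioc_right hm2))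
      ((hb.kernel.mul_integrableOn hs hsT hu huT).mono_set (Set.Ioc_subset_Ioc_left hm1)),
    hzero, add_zero]

end AuxLemmas
/-- Itô-type isometry for Volterra processes: for a step function
`φ = Σ_i φ_i 1_{[t_i, t_{i+1})}` on `[0,T]`, the elementary integral
`i_T(φ) = Σ_i φ_i (b_{t_{i+1}} − b_{t_i})` satisfies
`‖i_T(φ)‖²_{L²(Ω)} = ∫₀^T (∫_r^T φ(u) ∂K/∂u(u,r) du)² dr = ‖𝒦*_T φ‖²_{L²(0,T)}`. -/
theorem elementary_integral_isometry
    {Ω : Type*} [MeasurableSpace Ω] (P : Measure Ω) [IsProbabilityMeasure P]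
    (α : ℝ) (hα : α ∈ Set.Ioo (0 : ℝ) (1 / 2)) (K : ℝ → ℝ → ℝ) (b : ℝ → Ω → ℝ)
    (hb : IsVolterraProcess α K P b)
    (T : ℝ) (hT : 0 < T) (n : ℕ) (t : Fin (n + 1) → ℝ) (c : Fin n → ℝ)
    (ht : StrictMono t) (ht0 : t 0 = 0) (htn : t (Fin.last n) = T)
    (φ : ℝ → ℝ)
    (hφ : φ = fun u => ∑ i : Fin n,
      c i * Set.indicator (Set.Ico (t i.castSucc) (t i.succ)) (fun _ => (1 : ℝ)) u) :
    ∫ ω, (∑ i : Fin n, c i * (b (t i.succ) ω - b (t i.castSucc) ω)) ^ 2 ∂P =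
      ∫ r in Set.Ioc 0 T, (kernelStar T K φ r) ^ 2 := by
  obtain ⟨hα0, hα2⟩ := hα
  have hK := hb.kernel
  have h0 : ∀ i : Fin (n + 1), 0 ≤ t i := fun i => ht0 ▸ ht.monotone (Fin.zero_le i)
  have hTn : ∀ i : Fin (n + 1), t i ≤ T := fun i => htn ▸ ht.monotone (Fin.le_last i)
  have hts : ∀ i : Fin n, t i.castSucc < t i.succ := fun i => ht (Fin.castSucc_lt_succ (i := i))
  set Δ : Fin n → ℝ → ℝ := fun i r => K (t i.succ) r - K (t i.castSucc) r with hΔ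
  -- integrability of kernel products
  have hKmul : ∀ x y : Fin (n + 1),
      IntegrableOn (fun r => K (t x) r * K (t y) r) (Set.Ioc 0 T) := fun x y =>
    hK.mul_integrableOn (h0 x) (hTn x) (h0 y) (hTn y)
  have hΔmul : ∀ i j : Fin n, IntegrableOn (fun r => Δ i r * Δ j r) (Set.Ioc 0 T) := by
    intro i j
    have heq : (fun r => Δ i r * Δ j r) = fun r =>
        (K (t i.succ) r * K (t j.succ) r - K (t i.succ) r * K (t j.castSucc) r) -
        (K (t i.castSucc) r * K (t j.succ) r - K (t i.castSucc) r * K (t j.castSucc) r) :=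
      funext fun r => by simp only [hΔ]; ring
    rw [heq]
    exact (((hKmul i.succ j.succ).sub (hKmul i.succ j.castSucc)).sub
      ((hKmul i.castSucc j.succ).sub (hKmul i.castSucc j.castSucc)))
  -- Step 1: the kernelStar of φ, for a.e. r
  have hcount : ∀ᵐ r : ℝ, r ∉ Set.range t :=
    measure_eq_zero_iff_ae_notMem.mp ((Set.finite_range t).countable.measure_zero _)
  have key : ∀ r ∈ Set.Ioc 0 T, r ∉ Set.range t →
      kernelStar T K φ r = ∑ i : Fin n, c i * Δ i r := by
    intro r hrT hrn
    have hr : 0 < r := hrT.1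
    have hint0 : IntegrableOn (fun u => deriv (fun v => K v r) u) (Set.Ioc r T) :=
      hK.deriv_integrableOn hα0 hr
    have hint : ∀ i : Fin n, IntegrableOn (fun u =>
        Set.indicator (Set.Ico (t i.castSucc) (t i.succ)) (fun _ => (1:ℝ)) u *
          deriv (fun v => K v r) u) (Set.Ioc r T) := by
      intro i
      refine hint0.abs.mono'
        (((measurable_one.indicator measurableSet_Ico).mul
          (measurable_deriv _)).aestronglyMeasurable.restrict) ?_
      filter_upwards with u
      by_cases h : u ∈ Set.Ico (t i.castSucc) (t i.succ) <;>
        simp [h, abs_nonneg, Real.norm_eq_abs, abs_abs, le_refl]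
    rw [kernelStar, hφ]
    simp only [Finset.sum_mul]
    rw [integral_finset_sum _ (fun i _ => by
      simpa only [mul_assoc] using (hint i).const_mul (c i))]
    refine Finset.sum_congr rfl fun i _ => ?_
    simp only [mul_assoc]
    rw [integral_const_mul]
    congr 1
    exact hK.step_integral hα0 (h0 i.castSucc) (hts i) (hTn i.succ) hr
      (fun h => hrn ⟨i.castSucc, h.symm⟩) (fun h => hrn ⟨i.succ, h.symm⟩)
  -- Step 2: rewrite the RHS
  have hRHS : ∫ r in Set.Ioc 0 T, (kernelStar T K φ r) ^ 2 =
      ∑ i : Fin n, ∑ j : Fin n, (c i * c j) * ∫ r in Set.Ioc 0 T, Δ i r * Δ j r := by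
    have h1 : ∫ r in Set.Ioc 0 T, (kernelStar T K φ r) ^ 2 =
        ∫ r in Set.Ioc 0 T, ∑ i : Fin n, ∑ j : Fin n, (c i * c j) * (Δ i r * Δ j r) := by
      refine integral_congr_ae ?_
      filter_upwards [ae_restrict_of_ae hcount, ae_restrict_mem measurableSet_Ioc]
        with r h1 h2
      rw [key r h2 h1, sq, Finset.sum_mul_sum]
      exact Finset.sum_congr rfl fun i _ => Finset.sum_congr rfl fun j _ => by ring
    rw [h1, integral_finset_sum _ (fun i _ => integrable_finset_sum _
      (fun j _ => (hΔmul i j).const_mul _))]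
    refine Finset.sum_congr rfl fun i _ => ?_
    rw [integral_finset_sum _ (fun j _ => (hΔmul i j).const_mul _)]
    exact Finset.sum_congr rfl fun j _ => integral_const_mul _ _
  -- Step 3: the expectation side
  have hX : ∀ i : Fin n, MemLp (fun ω => b (t i.succ) ω - b (t i.castSucc) ω) 2 P :=
    fun i => (hb.memL2 _ (h0 i.succ)).sub (hb.memL2 _ (h0 i.castSucc))
  have hcross : ∀ i j : Fin n,
      ∫ ω, (b (t i.succ) ω - b (t i.castSucc) ω) *
        (b (t j.succ) ω - b (t j.castSucc) ω) ∂P =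
      ∫ r in Set.Ioc 0 T, Δ i r * Δ j r := by
    intro i j
    have hbm : ∀ x y : Fin (n + 1), Integrable (fun ω => b (t x) ω * b (t y) ω) P :=
      fun x y => memL2_mul_integrable (hb.memL2 _ (h0 x)) (hb.memL2 _ (h0 y))
    have heq : (fun ω => (b (t i.succ) ω - b (t i.castSucc) ω) *
        (b (t j.succ) ω - b (t j.castSucc) ω)) = fun ω =>
        (b (t i.succ) ω * b (t j.succ) ω - b (t i.succ) ω * b (t j.castSucc) ω) -
        (b (t i.castSucc) ω * b (t j.succ) ω - b (t i.castSucc) ω * b (t j.castSucc) ω) :=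
      funext fun ω => by ring
    have heq2 : (fun r => Δ i r * Δ j r) = fun r =>
        (K (t i.succ) r * K (t j.succ) r - K (t i.succ) r * K (t j.castSucc) r) -
        (K (t i.castSucc) r * K (t j.succ) r - K (t i.castSucc) r * K (t j.castSucc) r) :=
      funext fun r => by simp only [hΔ]; ring
    have hb1 : Integrable (fun ω => b (t i.succ) ω * b (t j.succ) ω -
        b (t i.succ) ω * b (t j.castSucc) ω) P := by
      exact (hbm i.succ j.succ).sub (hbm i.succ j.castSucc)
    have hb2 : Integrable (fun ω => b (t i.castSucc) ω * b (t j.succ) ω -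
        b (t i.castSucc) ω * b (t j.castSucc) ω) P := by
      exact (hbm i.castSucc j.succ).sub (hbm i.castSucc j.castSucc)
    have hk1 : IntegrableOn (fun r => K (t i.succ) r * K (t j.succ) r -
        K (t i.succ) r * K (t j.castSucc) r) (Set.Ioc 0 T) := by
      exact (hKmul i.succ j.succ).sub (hKmul i.succ j.castSucc)
    have hk2 : IntegrableOn (fun r => K (t i.castSucc) r * K (t j.succ) r -
        K (t i.castSucc) r * K (t j.castSucc) r) (Set.Ioc 0 T) := by
      exact (hKmul i.castSucc j.succ).sub (hKmul i.castSucc j.castSucc)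
    rw [heq, heq2,
      integral_sub hb1 hb2,
      integral_sub (hbm i.succ j.succ) (hbm i.succ j.castSucc),
      integral_sub (hbm i.castSucc j.succ) (hbm i.castSucc j.castSucc),
      integral_sub hk1 hk2,
      integral_sub (hKmul i.succ j.succ) (hKmul i.succ j.castSucc),
      integral_sub (hKmul i.castSucc j.succ) (hKmul i.castSucc j.castSucc),
      hb.cov_ext (h0 i.succ) (hTn i.succ) (h0 j.succ) (hTn j.succ),
      hb.cov_ext (h0 i.succ) (hTn i.succ) (h0 j.castSucc) (hTn j.castSucc),
      hb.cov_ext (h0 i.castSucc) (hTn i.castSucc) (h0 j.succ) (hTn j.succ),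
      hb.cov_ext (h0 i.castSucc) (hTn i.castSucc) (h0 j.castSucc) (hTn j.castSucc)]
  have hLHS : ∫ ω, (∑ i : Fin n, c i * (b (t i.succ) ω - b (t i.castSucc) ω)) ^ 2 ∂P =
      ∑ i : Fin n, ∑ j : Fin n, (c i * c j) *
        ∫ ω, (b (t i.succ) ω - b (t i.castSucc) ω) *
          (b (t j.succ) ω - b (t j.castSucc) ω) ∂P := by
    have hXmul : ∀ i j : Fin n, Integrable (fun ω =>
        (b (t i.succ) ω - b (t i.castSucc) ω) *
        (b (t j.succ) ω - b (t j.castSucc) ω)) P :=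
      fun i j => memL2_mul_integrable (hX i) (hX j)
    have h1 : (fun ω => (∑ i : Fin n, c i * (b (t i.succ) ω - b (t i.castSucc) ω)) ^ 2) =
        fun ω => ∑ i : Fin n, ∑ j : Fin n, (c i * c j) *
          ((b (t i.succ) ω - b (t i.castSucc) ω) *
           (b (t j.succ) ω - b (t j.castSucc) ω)) := by
      funext ω
      rw [sq, Finset.sum_mul_sum]
      exact Finset.sum_congr rfl fun i _ => Finset.sum_congr rfl fun j _ => by ring
    rw [h1, integral_finset_sum _ (fun i _ => integrable_finset_sum _
      (fun j _ => (hXmul i j).const_mul _))]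
    refine Finset.sum_congr rfl fun i _ => ?_
    rw [integral_finset_sum _ (fun j _ => (hXmul i j).const_mul _)]
    exact Finset.sum_congr rfl fun j _ => integral_const_mul _ _
  rw [hLHS, hRHS]
  exact Finset.sum_congr rfl fun i _ => Finset.sum_congr rfl fun j _ => by rw [hcross i j]
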